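/- The function F on the space of 2×2 real matrices defined by F(A) = |trace(A²)|^{3/2} is NOT twice continuously differentiable (F is not C²). In particular, its restriction to the line x ↦ [[0, x],[1, 0]], which equals x ↦ |2x|^{3/2}, fails to be C² at x = 0, even though F agrees with the C² function f(κ₁,κ₂) = (κ₁² + κ₂²)^{3/2} of the eigenvalues on all ℝ-diagonalisable 2×2 matrices. -/

import Mathlib

attribute [local instance] Matrix.normedAddCommGroup Matrix.normedSpace

section Stmt19Aux


noncomputable def g19 : ℝ → ℝ := fun x => Real.sign x * (3 * Real.sqrt 2 * Real.sqrt |x|)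

lemma hd_pos {x : ℝ} (hx : 0 < x) :
    HasDerivAt (fun y : ℝ => |2*y| ^ ((3:ℝ)/2)) (g19 x) x := by
  have h2x : (0:ℝ) < 2*x := by linarith
  have hr : HasDerivAt (fun y : ℝ => y ^ ((3:ℝ)/2)) ((3:ℝ)/2 * (2*x) ^ ((3:ℝ)/2 - 1)) (2*x) :=
    Real.hasDerivAt_rpow_const (Or.inl h2x.ne')
  have hl : HasDerivAt (fun y : ℝ => 2*y) 2 x := by
    simpa using (hasDerivAt_id x).const_mul (2:ℝ)
  have hc := hr.comp x hl
  have heq : (fun y : ℝ => |2*y| ^ ((3:ℝ)/2)) =ᶠ[nhds x] fun y => (2*y) ^ ((3:ℝ)/2) := by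
    filter_upwards [eventually_gt_nhds hx] with y hy
    rw [abs_of_pos (by linarith)]
  have := hc.congr_of_eventuallyEq heq
  refine this.congr_deriv ?_
  have : ((3:ℝ)/2 - 1) = (1:ℝ)/2 := by norm_num
  rw [this, ← Real.sqrt_eq_rpow, Real.sqrt_mul (by norm_num) x, g19,
    Real.sign_of_pos hx, abs_of_pos hx]
  ring

lemma hd_neg {x : ℝ} (hx : x < 0) :
    HasDerivAt (fun y : ℝ => |2*y| ^ ((3:ℝ)/2)) (g19 x) x := by
  have h2x : (0:ℝ) < -(2*x) := by linarith
  have hr : HasDerivAt (fun y : ℝ => y ^ ((3:ℝ)/2)) ((3:ℝ)/2 * (-(2*x)) ^ ((3:ℝ)/2 - 1)) (-(2*x)) :=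
    Real.hasDerivAt_rpow_const (Or.inl h2x.ne')
  have hl : HasDerivAt (fun y : ℝ => -(2*y)) (-2) x := by
    exact (((hasDerivAt_id' x).const_mul (2:ℝ)).neg).congr_deriv (by norm_num)
  have hc := hr.comp x hl
  have heq : (fun y : ℝ => |2*y| ^ ((3:ℝ)/2)) =ᶠ[nhds x] fun y => (-(2*y)) ^ ((3:ℝ)/2) := by
    filter_upwards [eventually_lt_nhds hx] with y hy
    rw [abs_of_neg (by linarith)]
  have := hc.congr_of_eventuallyEq heq
  refine this.congr_deriv ?_
  have h32 : ((3:ℝ)/2 - 1) = (1:ℝ)/2 := by norm_num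
  rw [h32, ← Real.sqrt_eq_rpow, show -(2*x) = 2 * (-x) by ring, Real.sqrt_mul (by norm_num) (-x),
    g19, Real.sign_of_neg hx, abs_of_neg hx]
  ring


lemma hd_zero : HasDerivAt (fun y : ℝ => |2*y| ^ ((3:ℝ)/2)) 0 0 := by
  rw [hasDerivAt_iff_tendsto_slope]
  apply squeeze_zero_norm' (a := fun y : ℝ => 2 ^ ((3:ℝ)/2) * Real.sqrt |y|)
  · filter_upwards [self_mem_nhdsWithin] with y (hy : y ≠ 0)
    have hy' : (0:ℝ) < |y| := abs_pos.2 hy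
    have key : |2*y| ^ ((3:ℝ)/2) = 2 ^ ((3:ℝ)/2) * (|y| * Real.sqrt |y|) := by
      rw [abs_mul, abs_of_pos (by norm_num : (0:ℝ) < 2),
        Real.mul_rpow (by norm_num) (abs_nonneg y),
        show (3:ℝ)/2 = 1 + 1/2 by norm_num, Real.rpow_add hy', Real.rpow_one,
        ← Real.sqrt_eq_rpow]
    have : slope (fun y : ℝ => |2*y| ^ ((3:ℝ)/2)) 0 y
        = (|2*y| ^ ((3:ℝ)/2)) / y := by
      simp [slope_def_field]
    rw [this, key]
    rw [Real.norm_eq_abs, abs_div]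
    rw [abs_of_nonneg (by positivity : (0:ℝ) ≤ 2 ^ ((3:ℝ)/2) * (|y| * Real.sqrt |y|))]
    rw [mul_comm |y| (Real.sqrt |y|), mul_div_assoc, mul_div_assoc,
      div_self hy'.ne', mul_one]
  · have h0 : Real.sqrt |0| = 0 := by simp
    have hc : Continuous (fun y : ℝ => 2 ^ ((3:ℝ)/2) * Real.sqrt |y|) :=
      continuous_const.mul (Real.continuous_sqrt.comp continuous_abs)
    have := hc.tendsto 0
    simp only [h0, abs_zero, Real.sqrt_zero, mul_zero] at this
    exact this.mono_left nhdsWithin_le_nhds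

lemma not_cd2 : ¬ ContDiffAt ℝ 2 (fun y : ℝ => |2*y| ^ ((3:ℝ)/2)) 0 := by
  intro h
  set f : ℝ → ℝ := fun y => |2*y| ^ ((3:ℝ)/2) with hf
  have hderiv : deriv f = g19 := by
    funext x
    rcases lt_trichotomy x 0 with hx | hx | hx
    · exact (hd_neg hx).deriv
    · subst hx
      rw [hd_zero.deriv, g19]
      simp
    · exact (hd_pos hx).deriv
  -- get DifferentiableAt of deriv f at 0
  obtain ⟨u, hu, hcd⟩ := h.contDiffOn (le_refl 2) (by simp)
  obtain ⟨ε, hε, hball⟩ := Metric.mem_nhds_iff.1 hu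
  have hcd' : ContDiffOn ℝ 1 (deriv f) (Metric.ball (0:ℝ) ε) :=
    (hcd.mono hball).deriv_of_isOpen Metric.isOpen_ball (by norm_num)
  have hdiff : DifferentiableAt ℝ (deriv f) 0 :=
    ((hcd'.differentiableOn one_ne_zero).differentiableAt
      (Metric.isOpen_ball.mem_nhds (Metric.mem_ball_self hε)))
  -- slope of deriv f at 0 tends to a finite limit
  have hslope := hasDerivAt_iff_tendsto_slope.1 hdiff.hasDerivAt
  -- but it equals 3√2 / √|y| which tends to atTop
  have heq : (fun y : ℝ => slope (deriv f) 0 y) =ᶠ[nhdsWithin 0 {(0:ℝ)}ᶜ]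
      fun y => 3 * Real.sqrt 2 / Real.sqrt |y| := by
    filter_upwards [self_mem_nhdsWithin] with y (hy : y ≠ 0)
    have h0 : g19 0 = 0 := by simp [g19]
    rw [slope_def_field, hderiv, h0, sub_zero, sub_zero, g19]
    rcases hy.lt_or_gt with hy' | hy'
    · rw [Real.sign_of_neg hy', abs_of_neg hy']
      have hs : Real.sqrt (-y) * Real.sqrt (-y) = -y := Real.mul_self_sqrt (by linarith)
      rw [eq_div_iff (Real.sqrt_ne_zero'.2 (by linarith)), div_mul_eq_mul_div,
        div_eq_iff hy]
      linear_combination (-(3 * Real.sqrt 2)) * hs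
    · rw [Real.sign_of_pos hy', abs_of_pos hy']
      have hs : Real.sqrt y * Real.sqrt y = y := Real.mul_self_sqrt (by linarith)
      rw [eq_div_iff (Real.sqrt_ne_zero'.2 (by linarith)), div_mul_eq_mul_div,
        div_eq_iff hy]
      linear_combination (3 * Real.sqrt 2) * hs
  have htop : Filter.Tendsto (fun y : ℝ => 3 * Real.sqrt 2 / Real.sqrt |y|)
      (nhdsWithin 0 {(0:ℝ)}ᶜ) Filter.atTop := by
    have h1 : Filter.Tendsto (fun y : ℝ => Real.sqrt |y|)
        (nhdsWithin 0 {(0:ℝ)}ᶜ) (nhdsWithin 0 (Set.Ioi 0)) := by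
      rw [tendsto_nhdsWithin_iff]
      constructor
      · have := (Real.continuous_sqrt.comp continuous_abs).tendsto 0
        simpa [Function.comp_def] using this.mono_left nhdsWithin_le_nhds
      · filter_upwards [self_mem_nhdsWithin] with y (hy : y ≠ 0)
        exact Real.sqrt_pos.2 (abs_pos.2 hy)
    have h2 := h1.inv_tendsto_nhdsGT_zero
    have h3 := h2.const_mul_atTop (by positivity : (0:ℝ) < 3 * Real.sqrt 2)
    simpa [div_eq_mul_inv] using h3
  exact not_tendsto_nhds_of_tendsto_atTop (htop.congr' heq.symm) _ hslope

lemma trace_line (x : ℝ) : ((!![0, x; 1, 0] : Matrix (Fin 2) (Fin 2) ℝ)^2).trace = 2*x := by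
  simp [pow_two, Matrix.trace_fin_two, Matrix.mul_apply, Fin.sum_univ_two]
  ring

lemma restr_eq :
    (fun x : ℝ =>
        |(((!![0, x; 1, 0] : Matrix (Fin 2) (Fin 2) ℝ)) ^ 2).trace| ^ ((3 : ℝ) / 2))
      = fun x : ℝ => |2*x| ^ ((3:ℝ)/2) := by
  funext x
  rw [trace_line]

end Stmt19Aux


/-- The function `F(A) = |trace (A²)|^{3/2}` on `2 × 2` real matrices
is not `C²`. Its restriction to the line `x ↦ [[0, x], [1, 0]]` equals
`x ↦ |2x|^{3/2}`, which fails to be `C²` at `x = 0`; this although `F` agrees with the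
`C²` function `f(κ₁,κ₂) = (κ₁² + κ₂²)^{3/2}` of the eigenvalues on all
`ℝ`-diagonalisable `2 × 2` matrices. -/
theorem stmt_19 :
    ¬ ContDiff ℝ 2
        (fun A : Matrix (Fin 2) (Fin 2) ℝ => |(A ^ 2).trace| ^ ((3 : ℝ) / 2)) ∧
    (∀ x : ℝ,
      |(((!![0, x; 1, 0] : Matrix (Fin 2) (Fin 2) ℝ)) ^ 2).trace| ^ ((3 : ℝ) / 2)
        = |2 * x| ^ ((3 : ℝ) / 2)) ∧
    ¬ ContDiffAt ℝ 2
        (fun x : ℝ =>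
          |(((!![0, x; 1, 0] : Matrix (Fin 2) (Fin 2) ℝ)) ^ 2).trace| ^ ((3 : ℝ) / 2))
        0 ∧
    ∀ (A S : Matrix (Fin 2) (Fin 2) ℝ) (κ : Fin 2 → ℝ), IsUnit S →
      S⁻¹ * A * S = Matrix.diagonal κ →
      |(A ^ 2).trace| ^ ((3 : ℝ) / 2) = ((κ 0) ^ 2 + (κ 1) ^ 2) ^ ((3 : ℝ) / 2) := by
  refine ⟨?_, ?_, ?_, ?_⟩
  · intro hF
    have hL : ContDiff ℝ 2 (fun x : ℝ => (!![0, x; 1, 0] : Matrix (Fin 2) (Fin 2) ℝ)) := by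
      have e : (fun x : ℝ => (!![0, x; 1, 0] : Matrix (Fin 2) (Fin 2) ℝ))
          = fun x : ℝ => x • (!![0, 1; 0, 0] : Matrix (Fin 2) (Fin 2) ℝ) + !![0, 0; 1, 0] := by
        funext x
        ext i j
        fin_cases i <;> fin_cases j <;> simp
      rw [e]
      exact (contDiff_id.smul contDiff_const).add contDiff_const
    have hcomp := hF.comp hL
    have : ContDiffAt ℝ 2 (fun x : ℝ => |2*x| ^ ((3:ℝ)/2)) 0 := by
      have := hcomp.contDiffAt (x := 0)
      simpa [Function.comp_def, restr_eq] using this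
    exact not_cd2 this
  · intro x
    rw [trace_line]
  · rw [restr_eq]
    exact not_cd2
  · intro A S κ hS h
    have hdet : IsUnit S.det := (Matrix.isUnit_iff_isUnit_det S).1 hS
    have hA : A = S * Matrix.diagonal κ * S⁻¹ := by
      rw [← h]
      rw [← Matrix.mul_assoc S (S⁻¹ * A) S, Matrix.mul_nonsing_inv_cancel_left S A hdet,
        Matrix.mul_nonsing_inv_cancel_right S A hdet]
    have htr : (A ^ 2).trace = κ 0 ^ 2 + κ 1 ^ 2 := by
      rw [hA, pow_two]
      have e : S * Matrix.diagonal κ * S⁻¹ * (S * Matrix.diagonal κ * S⁻¹)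
          = S * (Matrix.diagonal κ * Matrix.diagonal κ) * S⁻¹ := by
        simp only [Matrix.mul_assoc]
        rw [Matrix.nonsing_inv_mul_cancel_left S _ hdet]
      rw [e, Matrix.trace_mul_comm, Matrix.nonsing_inv_mul_cancel_left S _ hdet,
        Matrix.diagonal_mul_diagonal, Matrix.trace_diagonal]
      simp [Fin.sum_univ_two, pow_two]
    rw [htr, abs_of_nonneg (by positivity)]
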